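/- arXiv:2112.11321 — 3 statements merged into one kernel-verified Lean document; each statement's English description precedes it below -/
import Mathlib

section
/- The projective robustness is lower semicontinuous: for any sequence of density matrices ρₙ converging to ρ, Ω_F(ρ) ≤ liminf_{n→∞} Ω_F(ρₙ). Equivalently, the sublevel sets {ω : Ω_F(ω) ≤ γ} are closed for every γ ∈ ℝ. -/
open scoped ENNReal ComplexOrder
open Matrix

noncomputable section

variable {ι κ : Type*}

/-- Loewner order: `A ≤ B` iff `B - A` is positive semidefinite. -/
def Loe [Fintype ι] (A B : Matrix ι ι ℂ) : Prop := (B - A).PosSemidef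

/-- The (non-logarithmic) max-relative entropy `Rmax(ρ‖σ) = inf {λ : ρ ≤ λσ}`,
with the convention `inf ∅ = ∞`. -/
noncomputable def Rmax [Fintype ι] (ρ σ : Matrix ι ι ℂ) : ℝ≥0∞ :=
  sInf {x : ℝ≥0∞ | ∃ l : ℝ, 0 ≤ l ∧ x = ENNReal.ofReal l ∧ ((l : ℂ) • σ - ρ).PosSemidef}

/-- A density matrix: positive semidefinite with unit trace. -/
def IsState [Fintype ι] (ρ : Matrix ι ι ℂ) : Prop := ρ.PosSemidef ∧ ρ.trace = 1

/-- The projective robustness `Ω_F(ρ) = inf_{σ∈F} Rmax(ρ‖σ) · Rmax(σ‖ρ)`. -/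
noncomputable def Omega [Fintype ι] (F : Set (Matrix ι ι ℂ)) (ρ : Matrix ι ι ℂ) : ℝ≥0∞ :=
  ⨅ σ ∈ F, Rmax ρ σ * Rmax σ ρ

/-- The cone generated by `F`: `{cσ : c ≥ 0, σ ∈ F}`. -/
def coneF [Fintype ι] (F : Set (Matrix ι ι ℂ)) : Set (Matrix ι ι ℂ) :=
  {X | ∃ c : ℝ, 0 ≤ c ∧ ∃ σ ∈ F, X = (c : ℂ) • σ}

/-- The affine hull of `F` (real affine combinations). -/
def affHull [Fintype ι] (F : Set (Matrix ι ι ℂ)) : Set (Matrix ι ι ℂ) :=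
  {Z | ∃ (k : ℕ) (c : Fin k → ℝ) (σ : Fin k → Matrix ι ι ℂ),
    (∀ i, σ i ∈ F) ∧ (∑ i, c i) = 1 ∧ Z = ∑ i, ((c i : ℂ) • σ i)}

/-- The generalised robustness `R_F(ρ) = inf_{σ∈F} Rmax(ρ‖σ)`. -/
noncomputable def RF [Fintype ι] (F : Set (Matrix ι ι ℂ)) (ρ : Matrix ι ι ℂ) : ℝ≥0∞ :=
  ⨅ σ ∈ F, Rmax ρ σ

/-- The resource weight `W_F(ρ) = (inf_{σ∈F} Rmax(σ‖ρ))⁻¹`. -/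
noncomputable def WF [Fintype ι] (F : Set (Matrix ι ι ℂ)) (ρ : Matrix ι ι ℂ) : ℝ≥0∞ :=
  (⨅ σ ∈ F, Rmax σ ρ)⁻¹


open Filter




lemma isClosed_nonneg_complex : IsClosed {z : ℂ | 0 ≤ z} := by
  have : {z : ℂ | 0 ≤ z} = Complex.re ⁻¹' (Set.Ici 0) ∩ Complex.im ⁻¹' {0} := by
    ext z
    simp [Complex.le_def, eq_comm]
  rw [this]
  exact (isClosed_Ici.preimage Complex.continuous_re).inter
    (isClosed_singleton.preimage Complex.continuous_im)

lemma isClosed_posSemidef [Fintype ι] : IsClosed {A : Matrix ι ι ℂ | A.PosSemidef} := by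
  have h1 : IsClosed {A : Matrix ι ι ℂ | A.IsHermitian} :=
    isClosed_eq (continuous_id.matrix_conjTranspose) continuous_id
  have h2 : ∀ x : ι → ℂ, IsClosed {A : Matrix ι ι ℂ | 0 ≤ dotProduct (star x) (A *ᵥ x)} := by
    intro x
    have hc : Continuous fun A : Matrix ι ι ℂ => dotProduct (star x) (A *ᵥ x) :=
      Continuous.dotProduct continuous_const
        (Continuous.matrix_mulVec continuous_id continuous_const)
    exact isClosed_nonneg_complex.preimage hc
  have he : {A : Matrix ι ι ℂ | A.PosSemidef}
      = {A : Matrix ι ι ℂ | A.IsHermitian} ∩ ⋂ x : ι → ℂ, {A | 0 ≤ dotProduct (star x) (A *ᵥ x)} := by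
    ext A
    simp only [Set.mem_setOf_eq, Set.mem_inter_iff, Set.mem_iInter]
    exact ⟨fun h => ⟨h.1, h.dotProduct_mulVec_nonneg⟩, fun h => Matrix.PosSemidef.of_dotProduct_mulVec_nonneg h.1 h.2⟩
  rw [he]
  exact h1.inter (isClosed_iInter h2)

lemma psd_diag [Fintype ι] {A : Matrix ι ι ℂ} (hA : A.PosSemidef) (i : ι) : 0 ≤ A i i := by
  classical
  have h := hA.dotProduct_mulVec_nonneg (Pi.single i 1)
  simpa [dotProduct, Matrix.mulVec, Pi.single_apply, apply_ite, Finset.sum_ite_eq] using h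

lemma psd_trace_nonneg [Fintype ι] {A : Matrix ι ι ℂ} (hA : A.PosSemidef) : 0 ≤ A.trace := by
  rw [Matrix.trace]
  exact Finset.sum_nonneg fun i _ => psd_diag hA i

lemma one_le_scale [Fintype ι] {ρ σ : Matrix ι ι ℂ} (hρ : IsState ρ) (hσ : IsState σ) {l : ℝ}
    (h : ((l : ℂ) • σ - ρ).PosSemidef) : 1 ≤ l := by
  have h1 : (0 : ℂ) ≤ ((l : ℂ) • σ - ρ).trace := psd_trace_nonneg h
  rw [Matrix.trace_sub, Matrix.trace_smul, hσ.2, hρ.2, smul_eq_mul, mul_one] at h1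
  rw [Complex.le_def] at h1
  have := h1.1
  simp at this
  linarith

lemma one_le_Rmax [Fintype ι] {ρ σ : Matrix ι ι ℂ} (hρ : IsState ρ) (hσ : IsState σ) :
    1 ≤ Rmax ρ σ := by
  apply le_sInf
  rintro x ⟨l, hl0, rfl, hpsd⟩
  have h1 : 1 ≤ l := one_le_scale hρ hσ hpsd
  simpa using ENNReal.ofReal_le_ofReal h1

lemma quadform_two [Fintype ι] [DecidableEq ι] {A : Matrix ι ι ℂ} (hA : A.PosSemidef)
    {i j : ι} (hij : i ≠ j) (c d : ℂ) :
    0 ≤ star c * c * A i i + star c * d * A i j + star d * c * A j i + star d * d * A j j := by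
  have h := hA.dotProduct_mulVec_nonneg (Pi.single i c + Pi.single j d)
  have e : star (Pi.single i c + Pi.single j d) ⬝ᵥ (A *ᵥ (Pi.single i c + Pi.single j d))
      = star c * c * A i i + star c * d * A i j + star d * c * A j i + star d * d * A j j := by
    rw [star_add, ← Pi.single_star, ← Pi.single_star, Matrix.mulVec_add,
      Matrix.mulVec_single, Matrix.mulVec_single, add_dotProduct,
      single_dotProduct, single_dotProduct]
    simp only [Pi.add_apply, Pi.smul_apply, Matrix.col_apply, op_smul_eq_mul]
    ring
  rwa [e] at h

lemma abs_entry_le_one [Fintype ι] {A : Matrix ι ι ℂ} (hA : A.PosSemidef) (htr : A.trace = 1)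
    (i j : ι) : ‖A i j‖ ≤ 1 := by
  classical
  -- diagonal entries: real, nonneg, ≤ 1
  have hdiag : ∀ k, 0 ≤ (A k k).re ∧ (A k k).im = 0 := by
    intro k
    have := psd_diag hA k
    rw [Complex.le_def] at this
    exact ⟨by simpa using this.1, by simpa using this.2.symm⟩
  have hsum : (∑ k, (A k k).re) = 1 := by
    have : (A.trace).re = 1 := by rw [htr]; simp
    rw [Matrix.trace] at this
    simpa [Complex.re_sum] using this
  have hdle : ∀ k, (A k k).re ≤ 1 := by
    intro k
    rw [← hsum]
    exact Finset.single_le_sum (fun k _ => (hdiag k).1) (Finset.mem_univ k)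
  by_cases hij : i = j
  · subst hij
    have h1 := (hdiag i).1
    have h2 := (hdiag i).2
    rw [Complex.norm_def, Complex.normSq_apply, h2]
    have := hdle i
    nlinarith [Real.sqrt_le_sqrt (show (A i i).re * (A i i).re + 0 * 0 ≤ 1 by nlinarith),
      Real.sqrt_one, Real.sqrt_nonneg ((A i i).re * (A i i).re + 0 * 0)]
  · set z := A i j with hz
    set a := (A i i).re
    set b := (A j j).re
    have hji : A j i = starRingEnd ℂ z := by
      have := hA.1
      rw [Matrix.IsHermitian] at this
      have := congrFun (congrFun this j) i
      simpa [Matrix.conjTranspose_apply] using this.symm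
    have hq : ∀ t : ℝ, 0 ≤ Complex.normSq z * a * (t * t) + (-(2 * Complex.normSq z)) * t + b := by
      intro t
      have h := quadform_two hA hij ((t : ℂ) * z) (-1)
      rw [Complex.le_def] at h
      have hre := h.1
      simp only [star_mul', Complex.star_def, _root_.map_mul, Complex.conj_ofReal, hji,
        Complex.add_re, Complex.mul_re, Complex.mul_im, Complex.neg_re, Complex.neg_im,
        Complex.one_re, Complex.one_im, Complex.ofReal_re, Complex.ofReal_im,
        Complex.conj_re, Complex.conj_im, Complex.zero_re] at hre
      have hii := (hdiag i).2
      have hjj := (hdiag j).2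
      rw [Complex.normSq_apply]
      nlinarith [hre, sq_nonneg t, sq_nonneg z.re, sq_nonneg z.im]
    have hd := discrim_le_zero hq
    rw [discrim] at hd
    have hab : Complex.normSq z * Complex.normSq z ≤ Complex.normSq z * (a * b) := by nlinarith
    have hns : Complex.normSq z ≤ 1 := by
      by_cases h0 : Complex.normSq z = 0
      · rw [h0]; norm_num
      · have hpos : 0 < Complex.normSq z := lt_of_le_of_ne (Complex.normSq_nonneg z) (Ne.symm h0)
        have h1 : Complex.normSq z ≤ a * b := le_of_mul_le_mul_left (by linarith [hab]) hpos
        have := hdle i; have := hdle j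
        have := (hdiag i).1; have := (hdiag j).1
        nlinarith
    rw [Complex.norm_def]
    calc Real.sqrt (Complex.normSq z) ≤ Real.sqrt 1 := Real.sqrt_le_sqrt hns
      _ = 1 := Real.sqrt_one

lemma isCompact_of_closed_states [Fintype ι] {F : Set (Matrix ι ι ℂ)} (hF : IsClosed F)
    (hFstates : ∀ σ ∈ F, IsState σ) : IsCompact F := by
  classical
  have hK0 : IsCompact (show Set (Matrix ι ι ℂ) from
      Set.univ.pi fun _ : ι => Set.univ.pi fun _ : ι => Metric.closedBall (0 : ℂ) 1) :=
    isCompact_univ_pi fun _ => isCompact_univ_pi fun _ => isCompact_closedBall _ _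
  apply hK0.of_isClosed_subset hF
  intro σ hσ
  intro k _
  intro l _
  have := abs_entry_le_one (hFstates σ hσ).1 (hFstates σ hσ).2 k l
  simpa [Metric.mem_closedBall, dist_zero_right] using this

/-- Lower semicontinuity of the projective robustness: for any sequence of
states `ρₙ → ρ`, `Ω_F(ρ) ≤ liminf Ω_F(ρₙ)`. -/
theorem omega_lowerSemicontinuous [Fintype ι]
    (F : Set (Matrix ι ι ℂ)) (hF : IsClosed F) (hFstates : ∀ σ ∈ F, IsState σ)
    (ρseq : ℕ → Matrix ι ι ℂ) (hseq : ∀ k, IsState (ρseq k))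
    (ρ : Matrix ι ι ℂ) (hρ : IsState ρ)
    (hlim : Filter.Tendsto ρseq Filter.atTop (nhds ρ)) :
    Omega F ρ ≤ Filter.liminf (fun k => Omega F (ρseq k)) Filter.atTop := by
  classical
  haveI : FirstCountableTopology (Matrix ι ι ℂ) :=
    inferInstanceAs (FirstCountableTopology (ι → ι → ℂ))
  apply le_of_forall_gt_imp_ge_of_dense
  intro γ hγ
  obtain ⟨γ', hLγ', hγ'γ⟩ := exists_between hγ
  have hγ'top : γ' ≠ ⊤ := by
    intro h
    rw [h] at hγ'γ
    exact (not_le.mpr hγ'γ) le_top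
  -- frequently below γ'
  have hfreq : ∃ᶠ k in Filter.atTop, Omega F (ρseq k) < γ' :=
    Filter.frequently_lt_of_liminf_lt (by isBoundedDefault) hLγ'
  obtain ⟨φ, hφ, hφlt⟩ := Filter.extraction_of_frequently_atTop hfreq
  set r := γ'.toReal with hr
  -- choose near-optimal σ, l, m for each n
  have hchoice : ∀ n : ℕ, ∃ σ, σ ∈ F ∧ ∃ lm : ℝ × ℝ,
      1 ≤ lm.1 ∧ 1 ≤ lm.2 ∧ lm.1 ≤ r + 1 ∧ lm.2 ≤ r + 1 ∧
      lm.1 * lm.2 ≤ r + (1 / (n + 1)) * (2 * r + 1) ∧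
      (((lm.1 : ℂ) • σ - ρseq (φ n)).PosSemidef) ∧
      (((lm.2 : ℂ) • ρseq (φ n) - σ).PosSemidef) := by
    intro n
    have h := hφlt n
    rw [Omega, iInf_lt_iff] at h
    obtain ⟨σ, h⟩ := h
    rw [iInf_lt_iff] at h
    obtain ⟨hσF, h⟩ := h
    have h1ge : 1 ≤ Rmax (ρseq (φ n)) σ := one_le_Rmax (hseq _) (hFstates σ hσF)
    have h2ge : 1 ≤ Rmax σ (ρseq (φ n)) := one_le_Rmax (hFstates σ hσF) (hseq _)
    have hS1lt : Rmax (ρseq (φ n)) σ < γ' :=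
      lt_of_le_of_lt (le_mul_of_one_le_right zero_le h2ge) h
    have hS2lt : Rmax σ (ρseq (φ n)) < γ' :=
      lt_of_le_of_lt (le_mul_of_one_le_left zero_le h1ge) h
    have hS1top : Rmax (ρseq (φ n)) σ ≠ ⊤ := (lt_of_lt_of_le hS1lt le_top).ne_top
    have hS1top' : Rmax (ρseq (φ n)) σ ≠ ⊤ := hS1top
    have hS1top2 : Rmax σ (ρseq (φ n)) ≠ ⊤ := (lt_of_lt_of_le hS2lt le_top).ne_top
    set s := (Rmax (ρseq (φ n)) σ).toReal with hs
    set t := (Rmax σ (ρseq (φ n))).toReal with ht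
    have hst : s * t ≤ r := by
      rw [← ENNReal.toReal_mul]
      exact ENNReal.toReal_mono hγ'top h.le
    have hsle : s ≤ r := ENNReal.toReal_mono hγ'top hS1lt.le
    have htle : t ≤ r := ENNReal.toReal_mono hγ'top hS2lt.le
    have hs1 : 1 ≤ s := by
      have := ENNReal.toReal_mono hS1top h1ge
      simpa using this
    have ht1 : 1 ≤ t := by
      have := ENNReal.toReal_mono hS1top2 h2ge
      simpa using this
    set u : ℝ := 1 / (n + 1) with hu
    have hupos : 0 < u := by positivity
    have hule : u ≤ 1 := by
      rw [hu]
      rw [div_le_one (by positivity)]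
      linarith
    have hofu : (ENNReal.ofReal u) ≠ 0 := by
      simp [ENNReal.ofReal_eq_zero, not_le, hupos]
    have hpick : ∀ (X Y : Matrix ι ι ℂ), Rmax X Y ≠ ⊤ →
        ∃ l : ℝ, 0 ≤ l ∧ (((l : ℂ) • Y - X).PosSemidef) ∧ l < (Rmax X Y).toReal + u := by
      intro X Y hXY
      have hlt : Rmax X Y < Rmax X Y + ENNReal.ofReal u := ENNReal.lt_add_right hXY hofu
      rw [Rmax] at hlt
      obtain ⟨x, hxS, hxlt⟩ := sInf_lt_iff.mp hlt
      obtain ⟨l, hl0, rfl, hlpsd⟩ := hxS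
      refine ⟨l, hl0, hlpsd, ?_⟩
      have h2 : ENNReal.ofReal l < ENNReal.ofReal ((Rmax X Y).toReal + u) := by
        refine lt_of_lt_of_le hxlt ?_
        rw [ENNReal.ofReal_add ENNReal.toReal_nonneg hupos.le, ENNReal.ofReal_toReal hXY]
        exact le_refl _
      exact (ENNReal.ofReal_lt_ofReal_iff_of_nonneg hl0).mp h2
    obtain ⟨l, hl0, hlpsd, hlub⟩ := hpick (ρseq (φ n)) σ hS1top
    obtain ⟨m, hm0, hmpsd, hmub⟩ := hpick σ (ρseq (φ n)) hS1top2
    rw [← hs] at hlub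
    rw [← ht] at hmub
    have hl1 : 1 ≤ l := one_le_scale (hseq _) (hFstates σ hσF) hlpsd
    have hm1 : 1 ≤ m := one_le_scale (hFstates σ hσF) (hseq _) hmpsd
    refine ⟨σ, hσF, (l, m), hl1, hm1, by dsimp only; linarith, by dsimp only; linarith, ?_, hlpsd, hmpsd⟩
    dsimp only
    have h1 : l * m ≤ (s + u) * (t + u) := by nlinarith
    nlinarith
  choose σ hσF lm hl1 hm1 hlb hmb hprod hpsd1 hpsd2 using hchoice
  -- compactness extraction
  have hFcomp : IsCompact F := isCompact_of_closed_states hF hFstates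
  have hK : IsCompact (F ×ˢ (Set.Icc (1 : ℝ) (r + 1) ×ˢ Set.Icc (1 : ℝ) (r + 1))) :=
    hFcomp.prod (isCompact_Icc.prod isCompact_Icc)
  have hmem : ∀ n, (σ n, lm n) ∈ F ×ˢ (Set.Icc (1 : ℝ) (r + 1) ×ˢ Set.Icc (1 : ℝ) (r + 1)) :=
    fun n => ⟨hσF n, ⟨hl1 n, hlb n⟩, ⟨hm1 n, hmb n⟩⟩
  obtain ⟨p, hpK, ψ, hψ, htend⟩ := hK.tendsto_subseq hmem
  obtain ⟨σ0, l0, m0⟩ := p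
  obtain ⟨hs0F, hl0, hm0⟩ := hpK
  have htσ : Filter.Tendsto (fun k => σ (ψ k)) Filter.atTop (nhds σ0) :=
    (continuous_fst.tendsto _).comp htend
  have htl : Filter.Tendsto (fun k => (lm (ψ k)).1) Filter.atTop (nhds l0) :=
    ((continuous_fst.comp continuous_snd).tendsto _).comp htend
  have htm : Filter.Tendsto (fun k => (lm (ψ k)).2) Filter.atTop (nhds m0) :=
    ((continuous_snd.comp continuous_snd).tendsto _).comp htend
  have htρ : Filter.Tendsto (fun k => ρseq (φ (ψ k))) Filter.atTop (nhds ρ) :=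
    hlim.comp ((hφ.comp hψ).tendsto_atTop)
  -- PSD in the limit
  have hpsdA : ((l0 : ℂ) • σ0 - ρ).PosSemidef := by
    have htc : Filter.Tendsto (fun k => ((lm (ψ k)).1 : ℂ) • σ (ψ k) - ρseq (φ (ψ k)))
        Filter.atTop (nhds ((l0 : ℂ) • σ0 - ρ)) :=
      Filter.Tendsto.sub
        (Filter.Tendsto.smul ((Complex.continuous_ofReal.tendsto _).comp htl) htσ) htρ
    exact isClosed_posSemidef.mem_of_tendsto htc
      (Filter.Eventually.of_forall fun k => hpsd1 (ψ k))
  have hpsdB : ((m0 : ℂ) • ρ - σ0).PosSemidef := by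
    have htc : Filter.Tendsto (fun k => ((lm (ψ k)).2 : ℂ) • ρseq (φ (ψ k)) - σ (ψ k))
        Filter.atTop (nhds ((m0 : ℂ) • ρ - σ0)) :=
      Filter.Tendsto.sub
        (Filter.Tendsto.smul ((Complex.continuous_ofReal.tendsto _).comp htm) htρ) htσ
    exact isClosed_posSemidef.mem_of_tendsto htc
      (Filter.Eventually.of_forall fun k => hpsd2 (ψ k))
  -- limit of the products
  have hlm0 : l0 * m0 ≤ r := by
    have h1 : Filter.Tendsto (fun k => (lm (ψ k)).1 * (lm (ψ k)).2) Filter.atTop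
        (nhds (l0 * m0)) := htl.mul htm
    have h2 : Filter.Tendsto (fun k : ℕ => r + (1 / ((ψ k : ℝ) + 1)) * (2 * r + 1))
        Filter.atTop (nhds r) := by
      have hz : Filter.Tendsto (fun n : ℕ => 1 / ((n : ℝ) + 1)) Filter.atTop (nhds 0) :=
        tendsto_one_div_add_atTop_nhds_zero_nat
      have hz2 : Filter.Tendsto (fun k : ℕ => 1 / ((ψ k : ℝ) + 1)) Filter.atTop (nhds 0) :=
        hz.comp hψ.tendsto_atTop
      have := (tendsto_const_nhds (x := r)).add (hz2.mul_const (2 * r + 1))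
      simpa using this
    exact le_of_tendsto_of_tendsto' h1 h2 fun k => hprod (ψ k)
  -- conclude
  have hl01 : 1 ≤ l0 := hl0.1
  have hm01 : 1 ≤ m0 := hm0.1
  calc Omega F ρ ≤ Rmax ρ σ0 * Rmax σ0 ρ := by
        rw [Omega]
        exact iInf_le_of_le σ0 (iInf_le _ hs0F)
    _ ≤ ENNReal.ofReal l0 * ENNReal.ofReal m0 := by
        apply mul_le_mul'
        · exact sInf_le ⟨l0, by linarith, rfl, hpsdA⟩
        · exact sInf_le ⟨m0, by linarith, rfl, hpsdB⟩
    _ = ENNReal.ofReal (l0 * m0) := (ENNReal.ofReal_mul (by linarith)).symm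
    _ ≤ ENNReal.ofReal r := ENNReal.ofReal_le_ofReal hlm0
    _ = γ' := ENNReal.ofReal_toReal hγ'top
    _ ≤ γ := hγ'γ.le
end
end

section
/- The projective robustness is bounded above as Ω_F(ρ) ≤ R_F(ρ)·λ_min(ρ)^{-1} for any full-rank state ρ, where R_F is the generalized robustness and λ_min(ρ) the smallest eigenvalue of ρ. -/
open scoped ENNReal ComplexOrder
open Matrix

noncomputable section

variable {ι κ : Type*}

section Aux

variable {ι : Type*} [Fintype ι] [DecidableEq ι]

lemma psd_smul_real {A : Matrix ι ι ℂ} (hA : A.PosSemidef) {c : ℝ} (hc : 0 ≤ c) :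
    ((c : ℂ) • A).PosSemidef := by
  refine ⟨?_, fun x => ?_⟩
  · unfold Matrix.IsHermitian
    rw [Matrix.conjTranspose_smul, hA.1]
    congr 1
    simp [Complex.star_def, Complex.conj_ofReal]
  · exact (hA.smul (a := (c : ℂ)) (by exact_mod_cast hc)).2 x

lemma spectral_conj {A : Matrix ι ι ℂ} (hA : A.IsHermitian) (c : ℝ) :
    (c : ℂ) • (1 : Matrix ι ι ℂ) - A =
      (hA.eigenvectorUnitary : Matrix ι ι ℂ) *
        Matrix.diagonal (fun i => ((c - hA.eigenvalues i : ℝ) : ℂ)) *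
        (star (hA.eigenvectorUnitary : Matrix ι ι ℂ)) := by
  have hU : (hA.eigenvectorUnitary : Matrix ι ι ℂ) *
      star (hA.eigenvectorUnitary : Matrix ι ι ℂ) = 1 :=
    Matrix.mem_unitaryGroup_iff.mp hA.eigenvectorUnitary.2
  conv_lhs => rw [hA.spectral_theorem, Unitary.conjStarAlgAut_apply]
  have h1 : (c : ℂ) • (1 : Matrix ι ι ℂ) =
      (hA.eigenvectorUnitary : Matrix ι ι ℂ) * ((c : ℂ) • (1 : Matrix ι ι ℂ)) *
        star (hA.eigenvectorUnitary : Matrix ι ι ℂ) := by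
    rw [Matrix.mul_smul, Matrix.smul_mul, mul_one, hU]
  rw [h1, ← Matrix.sub_mul, ← Matrix.mul_sub]
  congr 2
  ext i j
  rcases eq_or_ne i j with h | h
  · subst h
    simp only [Matrix.sub_apply, Matrix.smul_apply, Matrix.one_apply_eq,
      Matrix.diagonal_apply_eq, Function.comp_apply, RCLike.ofReal_alg, smul_eq_mul, mul_one]
    rw [RCLike.real_smul_eq_coe_mul, mul_one,
      show (RCLike.ofReal (hA.eigenvalues i) : ℂ) = ((hA.eigenvalues i : ℝ) : ℂ) from rfl]
    push_cast; ring
  · simp [Matrix.diagonal_apply_ne _ h, Matrix.one_apply_ne h]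

lemma spectral_conj' {A : Matrix ι ι ℂ} (hA : A.IsHermitian) (c : ℝ) :
    A - (c : ℂ) • (1 : Matrix ι ι ℂ) =
      (hA.eigenvectorUnitary : Matrix ι ι ℂ) *
        Matrix.diagonal (fun i => ((hA.eigenvalues i - c : ℝ) : ℂ)) *
        (star (hA.eigenvectorUnitary : Matrix ι ι ℂ)) := by
  have hU : (hA.eigenvectorUnitary : Matrix ι ι ℂ) *
      star (hA.eigenvectorUnitary : Matrix ι ι ℂ) = 1 :=
    Matrix.mem_unitaryGroup_iff.mp hA.eigenvectorUnitary.2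
  conv_lhs => rw [hA.spectral_theorem, Unitary.conjStarAlgAut_apply]
  have h1 : (c : ℂ) • (1 : Matrix ι ι ℂ) =
      (hA.eigenvectorUnitary : Matrix ι ι ℂ) * ((c : ℂ) • (1 : Matrix ι ι ℂ)) *
        star (hA.eigenvectorUnitary : Matrix ι ι ℂ) := by
    rw [Matrix.mul_smul, Matrix.smul_mul, mul_one, hU]
  rw [h1, ← Matrix.sub_mul, ← Matrix.mul_sub]
  congr 2
  ext i j
  rcases eq_or_ne i j with h | h
  · subst h
    simp only [Matrix.sub_apply, Matrix.smul_apply, Matrix.one_apply_eq,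
      Matrix.diagonal_apply_eq, Function.comp_apply, RCLike.ofReal_alg, smul_eq_mul, mul_one]
    rw [RCLike.real_smul_eq_coe_mul, mul_one,
      show (RCLike.ofReal (hA.eigenvalues i) : ℂ) = ((hA.eigenvalues i : ℝ) : ℂ) from rfl]
    push_cast; ring
  · simp [Matrix.diagonal_apply_ne _ h, Matrix.one_apply_ne h]

lemma smul_one_sub_psd {A : Matrix ι ι ℂ} (hA : A.IsHermitian) {c : ℝ}
    (h : ∀ i, hA.eigenvalues i ≤ c) : ((c : ℂ) • (1 : Matrix ι ι ℂ) - A).PosSemidef := by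
  rw [spectral_conj hA c]
  exact (Matrix.PosSemidef.diagonal (fun i => by
    rw [Pi.zero_apply, Complex.zero_le_real]; linarith [h i])).mul_mul_conjTranspose_same _

lemma sub_smul_one_psd {A : Matrix ι ι ℂ} (hA : A.IsHermitian) {c : ℝ}
    (h : ∀ i, c ≤ hA.eigenvalues i) : (A - (c : ℂ) • (1 : Matrix ι ι ℂ)).PosSemidef := by
  rw [spectral_conj' hA c]
  exact (Matrix.PosSemidef.diagonal (fun i => by
    rw [Pi.zero_apply, Complex.zero_le_real]; linarith [h i])).mul_mul_conjTranspose_same _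

lemma trace_eq_sum_eigs {A : Matrix ι ι ℂ} (hA : A.IsHermitian) :
    A.trace = ((∑ i, hA.eigenvalues i : ℝ) : ℂ) := by
  conv_lhs => rw [hA.spectral_theorem, Unitary.conjStarAlgAut_apply]
  rw [Matrix.trace_mul_cycle,
    Matrix.mem_unitaryGroup_iff'.mp hA.eigenvectorUnitary.2, one_mul, Matrix.trace_diagonal]
  push_cast
  rfl

lemma state_sub_psd {σ : Matrix ι ι ℂ} (hσ : IsState σ) :
    ((1 : ℂ) • (1 : Matrix ι ι ℂ) - σ).PosSemidef := by
  apply smul_one_sub_psd hσ.1.isHermitian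
  have hsum : (∑ i, hσ.1.isHermitian.eigenvalues i) = 1 := by
    have := trace_eq_sum_eigs hσ.1.isHermitian
    exact_mod_cast this.symm.trans hσ.2
  intro i
  rw [← hsum]
  exact Finset.single_le_sum (fun j _ => hσ.1.eigenvalues_nonneg j) (Finset.mem_univ i)

end Aux

/-- `Ω_F(ρ) ≤ R_F(ρ)·λ_min(ρ)⁻¹` for a full-rank state `ρ`, assuming the
generalised robustness is achieved by some `σ* ∈ F`. -/
theorem omega_upper_bound_robustness_eigenvalue [Fintype ι] [DecidableEq ι] [Nonempty ι]
    (F : Set (Matrix ι ι ℂ)) (hF : IsClosed F) (hFstates : ∀ σ ∈ F, IsState σ)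
    (ρ : Matrix ι ι ℂ) (hρ : IsState ρ) (hfull : IsUnit ρ.det)
    (hach : ∃ σ ∈ F, Rmax ρ σ = RF F ρ)
    (lammin : ℝ) (hlam : lammin = ⨅ i, (hρ.1.isHermitian).eigenvalues i) :
    Omega F ρ ≤ RF F ρ * ENNReal.ofReal lammin⁻¹ := by
  
  obtain ⟨σs, hσsF, hσeq⟩ := hach
  -- positivity of lammin
  set f := (hρ.1.isHermitian).eigenvalues with hf
  have hfpos : ∀ i, 0 < f i := by
    intro i
    rcases lt_or_eq_of_le (hρ.1.eigenvalues_nonneg i) with h | h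
    · exact h
    · exfalso
      have hdet : ρ.det = ∏ j, ((f j : ℝ) : ℂ) := hρ.1.isHermitian.det_eq_prod_eigenvalues
      have : ρ.det = 0 := by
        rw [hdet]
        refine Finset.prod_eq_zero (Finset.mem_univ i) ?_
        rw [show f i = (0:ℝ) from h.symm]
        norm_num
      exact hfull.ne_zero this
  have hbdd : BddBelow (Set.range f) := Set.Finite.bddBelow (Set.finite_range f)
  have hll : ∀ i, lammin ≤ f i := fun i => hlam ▸ ciInf_le hbdd i
  have hlpos : 0 < lammin := by
    obtain ⟨i, hi⟩ := exists_eq_ciInf_of_finite (f := f)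
    rw [hlam, ← hi]
    exact hfpos i
  -- key positive semidefiniteness
  have h1 : (ρ - (lammin : ℂ) • (1 : Matrix ι ι ℂ)).PosSemidef :=
    sub_smul_one_psd hρ.1.isHermitian hll
  have h2 : ((1 : ℂ) • (1 : Matrix ι ι ℂ) - σs).PosSemidef :=
    state_sub_psd (hFstates σs hσsF)
  have h3 : (((lammin⁻¹ : ℝ) : ℂ) • (ρ - (lammin : ℂ) • (1 : Matrix ι ι ℂ))).PosSemidef :=
    psd_smul_real h1 (inv_nonneg.mpr hlpos.le)
  have hmul : ((lammin⁻¹ : ℝ) : ℂ) * ((lammin : ℝ) : ℂ) = 1 := by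
    push_cast
    exact_mod_cast inv_mul_cancel₀ hlpos.ne'
  have key : (((lammin⁻¹ : ℝ) : ℂ) • ρ - σs).PosSemidef := by
    have e : ((lammin⁻¹ : ℝ) : ℂ) • ρ - σs =
        ((lammin⁻¹ : ℝ) : ℂ) • (ρ - (lammin : ℂ) • (1 : Matrix ι ι ℂ)) +
          ((1 : ℂ) • (1 : Matrix ι ι ℂ) - σs) := by
      rw [smul_sub, smul_smul, hmul, one_smul]
      abel
    rw [e]
    exact h3.add h2
  have hR2 : Rmax σs ρ ≤ ENNReal.ofReal lammin⁻¹ :=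
    sInf_le ⟨lammin⁻¹, inv_nonneg.mpr hlpos.le, rfl, key⟩
  calc Omega F ρ ≤ Rmax ρ σs * Rmax σs ρ := iInf₂_le σs hσsF
    _ ≤ RF F ρ * ENNReal.ofReal lammin⁻¹ := mul_le_mul' (le_of_eq hσeq) hR2
end
end

section
/- Monotonicity of the projective robustness under probabilistic resource-non-generating maps: let E be a positive, trace-non-increasing linear map such that for every σ ∈ F with Tr E(σ) > 0, E(σ)/Tr E(σ) ∈ F. If ρ is a state with Tr E(ρ) > 0, then Ω_F(E(ρ)/Tr E(ρ)) ≤ Ω_F(ρ). -/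
open scoped ENNReal ComplexOrder
open Matrix

noncomputable section

variable {ι κ : Type*}

lemma psd_diag_re_nonneg [Fintype ι] [DecidableEq ι] {A : Matrix ι ι ℂ} (hA : A.PosSemidef)
    (i : ι) : 0 ≤ (A i i).re := by
  have h := hA.dotProduct_mulVec_nonneg (Pi.single i 1)
  have : star (Pi.single i 1) ⬝ᵥ (A *ᵥ Pi.single i 1) = A i i := by
    simp [dotProduct, mulVec, Pi.single_apply, apply_ite (star : ℂ → ℂ),
      Finset.sum_ite_eq', mul_ite]
  rw [this] at h
  exact (Complex.le_def.mp h).1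

lemma psd_trace_re_nonneg [Fintype ι] {A : Matrix ι ι ℂ} (hA : A.PosSemidef) :
    0 ≤ A.trace.re := by
  classical
  rw [Matrix.trace, Complex.re_sum]
  exact Finset.sum_nonneg fun i _ => psd_diag_re_nonneg hA i

lemma psd_smul' [Fintype ι] {A : Matrix ι ι ℂ} (hA : A.PosSemidef) {c : ℝ} (hc : 0 ≤ c) :
    ((c : ℂ) • A).PosSemidef := by
  refine Matrix.PosSemidef.of_dotProduct_mulVec_nonneg ?_ ?_
  · simpa [Matrix.IsHermitian, conjTranspose_smul, Complex.star_def, Complex.conj_ofReal]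
      using congrArg ((c : ℂ) • ·) hA.1.eq
  · intro x
    rw [smul_mulVec, dotProduct_smul, smul_eq_mul]
    exact mul_nonneg (by exact_mod_cast Complex.zero_le_real.mpr hc) (hA.dotProduct_mulVec_nonneg x)

lemma trace_re_smul_sub [Fintype ι] (l : ℝ) (A B : Matrix ι ι ℂ) :
    (((l : ℂ) • A - B).trace).re = l * A.trace.re - B.trace.re := by
  simp [Matrix.trace_sub, Matrix.trace_smul, Complex.sub_re, smul_eq_mul, Complex.mul_re]

lemma rmax_le [Fintype ι] {ρ σ : Matrix ι ι ℂ} {l : ℝ} (hl : 0 ≤ l)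
    (h : ((l : ℂ) • σ - ρ).PosSemidef) : Rmax ρ σ ≤ ENNReal.ofReal l :=
  sInf_le ⟨l, hl, rfl, h⟩

lemma aux_inf_mul (c : ℝ≥0∞) (S T : Set ℝ≥0∞)
    (hS : ∀ x ∈ S, 1 ≤ x ∧ x ≠ ⊤) (hT : ∀ y ∈ T, 1 ≤ y ∧ y ≠ ⊤)
    (h : ∀ x ∈ S, ∀ y ∈ T, c ≤ x * y) : c ≤ sInf S * sInf T := by
  have hS1 : 1 ≤ sInf S := le_sInf fun x hx => (hS x hx).1
  have hT1 : 1 ≤ sInf T := le_sInf fun y hy => (hT y hy).1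
  rcases S.eq_empty_or_nonempty with rfl | ⟨x0, hx0⟩
  · rw [sInf_empty, ENNReal.top_mul (by intro h0; rw [h0] at hT1; exact (by simp at hT1 : False))]
    exact le_top
  rcases T.eq_empty_or_nonempty with rfl | ⟨y0, hy0⟩
  · rw [sInf_empty, ENNReal.mul_top (by intro h0; rw [h0] at hS1; exact (by simp at hS1 : False))]
    exact le_top
  have hSt : sInf S ≠ ⊤ := ne_top_of_le_ne_top (hS x0 hx0).2 (sInf_le hx0)
  have hS0 : sInf S ≠ 0 := fun h0 => by rw [h0] at hS1; simp at hS1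
  rw [sInf_eq_iInf' T, ENNReal.mul_iInf_of_ne hS0 hSt]
  refine le_iInf fun ⟨y, hy⟩ => ?_
  have hy0 : (y : ℝ≥0∞) ≠ 0 := fun h0 => by
    have := (hT y hy).1; rw [h0] at this; simp at this
  rw [sInf_eq_iInf' S, ENNReal.iInf_mul_of_ne hy0 (hT y hy).2]
  exact le_iInf fun ⟨x, hx⟩ => h x hx y hy

/-- Monotonicity of the projective robustness under probabilistic
resource-non-generating maps: if `E` is positive, trace-non-increasing, and maps every free
state (with nonzero output trace) to a free state after normalisation, then
`Ω_{F'}(E(ρ)/Tr E(ρ)) ≤ Ω_F(ρ)`. -/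
theorem omega_monotone_probabilistic [Fintype ι] [Fintype κ]
    (F : Set (Matrix ι ι ℂ)) (F' : Set (Matrix κ κ ℂ))
    (hF : IsClosed F) (hF' : IsClosed F')
    (hFstates : ∀ σ ∈ F, IsState σ) (hF'states : ∀ σ ∈ F', IsState σ)
    (E : Matrix ι ι ℂ →ₗ[ℂ] Matrix κ κ ℂ)
    (hpos : ∀ X : Matrix ι ι ℂ, X.PosSemidef → (E X).PosSemidef)
    (htr : ∀ X : Matrix ι ι ℂ, X.PosSemidef → ((E X).trace).re ≤ (X.trace).re)
    (hfree : ∀ σ ∈ F, 0 < ((E σ).trace).re →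
      ((((E σ).trace.re)⁻¹ : ℂ) • E σ) ∈ F')
    (ρ : Matrix ι ι ℂ) (hρ : IsState ρ) (hp : 0 < ((E ρ).trace).re) :
    Omega F' ((((E ρ).trace.re)⁻¹ : ℂ) • E ρ) ≤ Omega F ρ := by
  set t : ℝ := ((E ρ).trace).re with ht
  set ρ' : Matrix κ κ ℂ := ((t : ℂ))⁻¹ • E ρ with hρ'
  refine le_iInf₂ fun σ hσ => ?_
  have hσst := hFstates σ hσ
  -- elements of the Rmax sets are ≥ 1 and finite
  have hmem : ∀ (A B : Matrix ι ι ℂ), IsState A → IsState B →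
      ∀ x ∈ {x : ℝ≥0∞ | ∃ l : ℝ, 0 ≤ l ∧ x = ENNReal.ofReal l ∧
        ((l : ℂ) • B - A).PosSemidef}, 1 ≤ x ∧ x ≠ ⊤ := by
    rintro A B hA hB x ⟨l, hl0, rfl, hpsd⟩
    have := psd_trace_re_nonneg hpsd
    rw [trace_re_smul_sub, hB.2, hA.2] at this
    simp only [Complex.one_re, mul_one] at this
    constructor
    · rw [show (1 : ℝ≥0∞) = ENNReal.ofReal 1 by simp]
      exact ENNReal.ofReal_le_ofReal (by linarith)
    · exact ENNReal.ofReal_ne_top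
  refine aux_inf_mul _ _ _ (hmem ρ σ hρ hσst) (hmem σ ρ hσst hρ) ?_
  rintro x ⟨l, hl0, rfl, hlpsd⟩ y ⟨m, hm0, rfl, hmpsd⟩
  -- basic facts about l
  have hl1 : 1 ≤ l := by
    have := psd_trace_re_nonneg hlpsd
    rw [trace_re_smul_sub, hσst.2, hρ.2] at this
    simp only [Complex.one_re, mul_one] at this; linarith
  -- s = trace of E σ is positive
  set s : ℝ := ((E σ).trace).re with hs
  have hE1 : ((l : ℂ) • E σ - E ρ).PosSemidef := by
    have := hpos _ hlpsd
    rwa [map_sub, _root_.map_smul] at this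
  have hE2 : ((m : ℂ) • E ρ - E σ).PosSemidef := by
    have := hpos _ hmpsd
    rwa [map_sub, _root_.map_smul] at this
  have hls : 0 ≤ l * s - t := by
    have := psd_trace_re_nonneg hE1
    rwa [trace_re_smul_sub] at this
  have hspos : 0 < s := by nlinarith
  set σ' : Matrix κ κ ℂ := ((s : ℂ))⁻¹ • E σ with hσ'
  have hσ'F : σ' ∈ F' := by rw [hσ', hs]; exact hfree σ hσ hspos
  have htne : (t : ℝ) ≠ 0 := ne_of_gt hp
  have hsne : (s : ℝ) ≠ 0 := ne_of_gt hspos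
  -- ρ' ≤ (l s / t) σ'
  have key1 : (((l * s / t : ℝ) : ℂ) • σ' - ρ') = ((t⁻¹ : ℝ) : ℂ) • ((l : ℂ) • E σ - E ρ) := by
    rw [hσ', hρ', smul_smul, smul_sub, smul_smul, Complex.ofReal_inv]
    congr 2
    push_cast
    field_simp
  have hr1 : Rmax ρ' σ' ≤ ENNReal.ofReal (l * s / t) := by
    refine rmax_le (by positivity) ?_
    rw [key1]
    exact psd_smul' hE1 (by positivity)
  -- σ' ≤ (m t / s) ρ'
  have key2 : (((m * t / s : ℝ) : ℂ) • ρ' - σ') = ((s⁻¹ : ℝ) : ℂ) • ((m : ℂ) • E ρ - E σ) := by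
    rw [hσ', hρ', smul_smul, smul_sub, smul_smul, Complex.ofReal_inv]
    congr 2
    push_cast
    field_simp
  have hr2 : Rmax σ' ρ' ≤ ENNReal.ofReal (m * t / s) := by
    refine rmax_le (by positivity) ?_
    rw [key2]
    exact psd_smul' hE2 (by positivity)
  calc Omega F' ρ' ≤ Rmax ρ' σ' * Rmax σ' ρ' := iInf₂_le σ' hσ'F
    _ ≤ ENNReal.ofReal (l * s / t) * ENNReal.ofReal (m * t / s) := mul_le_mul' hr1 hr2
    _ = ENNReal.ofReal ((l * s / t) * (m * t / s)) := (ENNReal.ofReal_mul (by positivity)).symm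
    _ = ENNReal.ofReal (l * m) := by rw [show (l * s / t) * (m * t / s) = l * m by field_simp]
    _ = ENNReal.ofReal l * ENNReal.ofReal m := ENNReal.ofReal_mul hl0
end
end
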